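/- Let (b_n) be a D-sequence with b_{n+1}/b_n → ∞ and let x ∈ (−1/2, 1/2] with expansion x = ∑_{n≥1} d_n/b_n, |d_n| ≤ b_n/(2b_{n−1}). If the character χ : ℤ → ℝ/ℤ, k ↦ kx + ℤ, is continuous for the topology τ_b (equivalently, there exists m with χ(V_{b,m}) ⊆ 𝕋₊), then d_n = 0 for all but finitely many n; consequently x is of the form a/b_N for some integers a, N, and χ belongs to the subgroup generated by the characters ξ_n : k ↦ k/b_n + ℤ. -/

import Mathlib

def IsDSeq (b : ℕ → ℕ) : Prop :=
  b 0 = 1 ∧ (∀ n, b n ∣ b (n + 1)) ∧ ∀ n, b n ≠ b (n + 1)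

namespace DS

variable (b : ℕ → ℕ) (d : ℕ → ℤ) (x : ℝ)

noncomputable def S (n : ℕ) : ℝ := ∑ j ∈ Finset.range n, (d (j+1) : ℝ) / b (j+1)

def Z (n : ℕ) : ℤ := ∑ j ∈ Finset.range n, d (j+1) * ((b n / b (j+1) : ℕ) : ℤ)

noncomputable def r (n : ℕ) : ℝ := b n * (x - S b d n)

variable {b}

lemma pos (hb : IsDSeq b) (n : ℕ) : 0 < b n := by
  rcases Nat.eq_zero_or_pos (b n) with h | h
  · exfalso
    exact hb.2.2 n (by rw [h]; exact (zero_dvd_iff.mp (h ▸ hb.2.1 n)).symm)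
  · exact h

lemma double (hb : IsDSeq b) (n : ℕ) : 2 * b n ≤ b (n+1) := by
  obtain ⟨c, hc⟩ := hb.2.1 n
  have hc1 : c ≠ 1 := by rintro rfl; simp at hc; exact hb.2.2 n hc.symm
  have hp1 : 0 < b (n+1) := pos hb (n+1)
  have hc0 : c ≠ 0 := by rintro rfl; simp at hc; omega
  have : 2 ≤ c := by omega
  calc 2 * b n ≤ c * b n := Nat.mul_le_mul_right _ this
    _ = b (n+1) := by rw [hc]; ring

lemma mono (hb : IsDSeq b) : Monotone b := by
  apply monotone_nat_of_le_succ
  intro n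
  have := double hb n
  omega

lemma dvd_of_le (hb : IsDSeq b) {i j : ℕ} (h : i ≤ j) : b i ∣ b j := by
  induction j with
  | zero => simpa [Nat.le_zero.mp h]
  | succ k ih =>
    rcases Nat.lt_or_ge i (k+1) with h' | h'
    · exact dvd_trans (ih (by omega)) (hb.2.1 k)
    · have : i = k + 1 := by omega
      rw [this]

lemma pow_le (hb : IsDSeq b) (n j : ℕ) : b n * 2^j ≤ b (n+j) := by
  induction j with
  | zero => simp
  | succ k ih =>
    have h2 := double hb (n+k)
    calc b n * 2^(k+1) = (b n * 2^k) * 2 := by ring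
      _ ≤ b (n+k) * 2 := Nat.mul_le_mul_right _ ih
      _ ≤ b (n+k+1) := by omega

lemma ge_id (hb : IsDSeq b) (n : ℕ) : n ≤ b n := by
  have := pow_le hb 0 n
  rw [hb.1] at this
  simp at this
  have := @Nat.lt_two_pow_self n
  omega

lemma Z_eq (hb : IsDSeq b) (n : ℕ) : (Z b d n : ℝ) = b n * S b d n := by
  rw [Z, S, Finset.mul_sum, Int.cast_sum]
  apply Finset.sum_congr rfl
  intro j hj
  have hj' : j + 1 ≤ n := Finset.mem_range.mp hj
  have hdvd : b (j+1) ∣ b n := dvd_of_le hb hj'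
  have hne : ((b (j+1) : ℝ)) ≠ 0 := by exact_mod_cast (pos hb (j+1)).ne'
  rw [Int.cast_mul, Int.cast_natCast, Nat.cast_div hdvd hne]
  field_simp

lemma bx_eq (hb : IsDSeq b) (n : ℕ) : (b n : ℝ) * x = Z b d n + r b d x n := by
  rw [Z_eq d hb n, r]; ring

lemma r_rec (hb : IsDSeq b) (n : ℕ) :
    r b d x n = ((b n : ℝ) / b (n+1)) * (d (n+1) + r b d x (n+1)) := by
  have h1 : ((b (n+1) : ℝ)) ≠ 0 := by exact_mod_cast (pos hb (n+1)).ne'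
  have hS : S b d (n+1) = S b d n + (d (n+1) : ℝ) / b (n+1) := by
    rw [S, Finset.sum_range_succ, ← S]
  rw [r, r, hS]
  field_simp
  ring


lemma dist_small {t : ℝ} (h : ∃ z : ℤ, |t - z| ≤ 1/4) (h2 : |t| < 3/4) : |t| ≤ 1/4 := by
  obtain ⟨z, hz⟩ := h
  have h1 : |(z:ℝ)| < 1 := by
    have he : (z:ℝ) = t - (t - z) := by ring
    rw [he]
    calc |t - (t - z)| ≤ |t| + |t - z| := abs_sub _ _
      _ < 3/4 + 1/4 := by linarith [abs_nonneg (t - z)]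
      _ = 1 := by norm_num
  have hz0 : z = 0 := by
    have h2' : |z| < 1 := by exact_mod_cast (by push_cast; exact h1 : |(z:ℝ)| < ((1:ℤ):ℝ))
    rw [abs_lt] at h2'
    omega
  subst hz0
  simpa using hz

lemma r_bound (hb : IsDSeq b)
    (hd : ∀ n : ℕ, 1 ≤ n → |(d n : ℝ)| ≤ (b n : ℝ) / (2 * b (n - 1)))
    (hsum : HasSum (fun n : ℕ => (d (n + 1) : ℝ) / b (n + 1)) x)
    {R : ℝ} (hR5 : 5 ≤ R) (n : ℕ) (hR : ∀ l, n ≤ l → R ≤ (b (l+1) : ℝ) / b l) :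
    |r b d x n| ≤ 5/8 := by
  have hR0 : (0:ℝ) < R := by linarith
  have hbpos : ∀ k, (0:ℝ) < b k := fun k => by exact_mod_cast pos hb k
  set f : ℕ → ℝ := fun j => (d (j+1) : ℝ) / b (j+1) with hf
  have htail : HasSum (fun j => f (j + n)) (x - S b d n) := by
    rw [hasSum_nat_add_iff n]
    have h : x - S b d n + ∑ i ∈ Finset.range n, f i = x := by rw [S]; ring
    rw [h]; exact hsum
  have hgrow : ∀ j : ℕ, (b n : ℝ) * R^j ≤ b (n + j) := by
    intro j
    induction j with
    | zero => simp
    | succ k ih =>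
      have h1 : R * (b (n+k):ℝ) ≤ b (n+k+1) := by
        have := (le_div_iff₀ (hbpos (n+k))).mp (hR (n+k) (by omega))
        linarith
      have hRk : (0:ℝ) ≤ R^k := pow_nonneg hR0.le k
      have he : (b n : ℝ) * R^(k+1) = ((b n:ℝ) * R^k) * R := by ring
      rw [show n + (k+1) = (n+k)+1 from rfl, he]
      nlinarith [hbpos (n+k)]
  have hterm : ∀ j : ℕ, |f (j + n)| ≤ (1/(2 * b n)) * (1/R)^j := by
    intro j
    have h1 : |f (j+n)| = |(d (j+n+1):ℝ)| / b (j+n+1) := by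
      rw [hf]; simp only []
      rw [abs_div, abs_of_pos (hbpos (j+n+1))]
    have h2 := hd (j+n+1) (by omega)
    rw [show (j+n+1) - 1 = n + j by omega] at h2
    have h5 : |f (j+n)| ≤ 1 / (2 * (b (n+j) : ℝ)) := by
      have hp : (0:ℝ) < 2 * b (n+j) := by have := hbpos (n+j); linarith
      rw [h1, div_le_div_iff₀ (hbpos (j+n+1)) hp]
      calc |(d (j+n+1):ℝ)| * (2 * b (n+j)) ≤ ((b (j+n+1):ℝ)/(2 * b (n+j))) * (2 * b (n+j)) :=
            mul_le_mul_of_nonneg_right h2 hp.le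
        _ = b (j+n+1) := div_mul_cancel₀ _ hp.ne'
        _ = 1 * b (j+n+1) := by ring
    have hRj : (0:ℝ) < R^j := pow_pos hR0 j
    have e1 : (1/(2 * (b n:ℝ))) * (1/R)^j = 1/(2 * b n * R^j) := by
      rw [div_pow, one_pow]
      field_simp
    rw [e1]
    refine h5.trans (one_div_le_one_div_of_le (mul_pos (mul_pos two_pos (hbpos n)) hRj) ?_)
    nlinarith [hgrow j]
  set B : ℕ → ℝ := fun j => (1/(2 * (b n:ℝ))) * (1/R)^j with hB
  have hr1 : (0:ℝ) ≤ 1/R := by positivity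
  have hr2 : 1/R < 1 := by rw [div_lt_one hR0]; linarith
  have hgeo : Summable B := (summable_geometric_of_lt_one hr1 hr2).mul_left _
  have habs : Summable (fun j => |f (j + n)|) :=
    Summable.of_nonneg_of_le (fun j => abs_nonneg _) hterm hgeo
  have h7 : |x - S b d n| ≤ ∑' j, |f (j+n)| := by
    rw [← htail.tsum_eq]
    have habs' : Summable (fun j => ‖f (j + n)‖) := by simpa [Real.norm_eq_abs] using habs
    simpa [Real.norm_eq_abs] using norm_tsum_le_tsum_norm habs'
  have h8 : ∑' j, |f (j+n)| ≤ ∑' j, B j := Summable.tsum_le_tsum hterm habs hgeo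
  have h9 : ∑' j, B j = (1/(2*(b n:ℝ))) * (1 - 1/R)⁻¹ := by
    rw [hB, tsum_mul_left, tsum_geometric_of_lt_one hr1 hr2]
  have h12 : (0:ℝ) < 1 - 1/R := by linarith
  have h10 : (1 - 1/R)⁻¹ ≤ (5:ℝ)/4 := by
    have h11 : (4:ℝ)/5 ≤ 1 - 1/R := by
      have : 1/R ≤ 1/5 := by
        apply one_div_le_one_div_of_le (by norm_num) hR5
      linarith
    calc (1 - 1/R)⁻¹ ≤ ((4:ℝ)/5)⁻¹ := inv_anti₀ (by norm_num) h11
      _ = 5/4 := by norm_num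
  rw [r, abs_mul, abs_of_pos (hbpos n)]
  have h13 : |x - S b d n| ≤ (1/(2*(b n:ℝ))) * (1 - 1/R)⁻¹ := by
    rw [← h9]; linarith
  calc (b n:ℝ) * |x - S b d n| ≤ (b n:ℝ) * ((1/(2*(b n:ℝ))) * (1 - 1/R)⁻¹) :=
        mul_le_mul_of_nonneg_left h13 (hbpos n).le
    _ = ((b n:ℝ) * (b n:ℝ)⁻¹) * ((1/2) * (1 - 1/R)⁻¹) := by ring
    _ = (1/2) * (1 - 1/R)⁻¹ := by rw [mul_inv_cancel₀ (hbpos n).ne', one_mul]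
    _ ≤ 5/8 := by nlinarith


open Finset in
lemma greedy {J : ℕ} {v : ℕ → ℝ} {K : ℕ → ℕ} {β : ℝ}
    (hv0 : ∀ i, i < J → 0 ≤ v i) (hvβ : ∀ i, i < J → v i ≤ β)
    (hbig : (1:ℝ)/4 < ∑ i ∈ range J, (K i : ℝ) * v i) :
    ∃ e : ℕ → ℕ, (∀ i, e i ≤ K i) ∧
      1/4 < ∑ i ∈ range J, (e i : ℝ) * v i ∧
      ∑ i ∈ range J, (e i : ℝ) * v i ≤ 1/4 + β := by
  classical
  set s : ℕ → ℝ := fun i => ∑ i' ∈ range i, (K i' : ℝ) * v i' with hs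
  have hterm : ∀ i, i < J → 0 ≤ (K i : ℝ) * v i := fun i hi =>
    mul_nonneg (Nat.cast_nonneg _) (hv0 i hi)
  have hJ1 : 1 ≤ J := by
    by_contra h
    have : J = 0 := by omega
    rw [this] at hbig; simp [hs] at hbig; linarith
  have hP : ∃ i, 1/4 < s (i+1) := ⟨J - 1, by rwa [show J - 1 + 1 = J by omega]⟩
  set I := Nat.find hP with hI
  have hPI : 1/4 < s (I+1) := Nat.find_spec hP
  have hIJ : I < J := by
    by_contra h
    push_neg at h
    have h1 : J - 1 < I := by omega
    exact Nat.find_min hP h1 (by rwa [show J - 1 + 1 = J by omega])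
  have hsI : s I ≤ 1/4 := by
    rcases Nat.eq_zero_or_pos I with h0 | h0
    · rw [h0]; simp [hs]
    · have := Nat.find_min hP (show I - 1 < I by omega)
      rw [show I - 1 + 1 = I by omega] at this
      linarith [not_lt.mp this]
  have hsucc : s (I+1) = s I + (K I : ℝ) * v I := by
    rw [hs]; simp [Finset.sum_range_succ]
  have hKv : 1/4 < s I + (K I : ℝ) * v I := by rw [← hsucc]; exact hPI
  have hKpos : 1 ≤ K I := by
    by_contra h
    have : K I = 0 := by omega
    rw [this] at hKv; simp at hKv; linarith
  have hQ : ∃ c, 1/4 < s I + ((c+1 : ℕ) : ℝ) * v I := by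
    refine ⟨K I - 1, ?_⟩
    rwa [show K I - 1 + 1 = K I by omega]
  set c₀ := Nat.find hQ with hc0
  have hQc : 1/4 < s I + ((c₀+1 : ℕ) : ℝ) * v I := Nat.find_spec hQ
  have hcK : c₀ + 1 ≤ K I := by
    by_contra h
    push_neg at h
    have h1 : K I - 1 < c₀ := by omega
    exact Nat.find_min hQ h1 (by rwa [show K I - 1 + 1 = K I by omega])
  have hup : s I + ((c₀+1 : ℕ) : ℝ) * v I ≤ 1/4 + β := by
    rcases Nat.eq_zero_or_pos c₀ with h0 | h0
    · rw [h0]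
      push_cast
      have := hvβ I hIJ
      linarith
    · have h2 := Nat.find_min hQ (show c₀ - 1 < c₀ by omega)
      rw [show c₀ - 1 + 1 = c₀ by omega] at h2
      have h3 : s I + (c₀ : ℝ) * v I ≤ 1/4 := not_lt.mp h2
      have := hvβ I hIJ
      push_cast
      push_cast at h3
      linarith
  refine ⟨fun i => if i < I then K i else if i = I then c₀ + 1 else 0, ?_, ?_, ?_⟩
  · intro i
    by_cases h1 : i < I
    · simp [h1]
    · by_cases h2 : i = I
      · simp [h1, h2]; omega
      · simp [h1, h2]
  all_goals {
    have heq : ∑ i ∈ range J,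
        ((if i < I then (K i:ℕ) else if i = I then c₀ + 1 else 0 : ℕ) : ℝ) * v i
        = s I + ((c₀+1 : ℕ) : ℝ) * v I := by
      rw [show J = I + 1 + (J - I - 1) by omega]
      rw [Finset.sum_range_add, Finset.sum_range_succ]
      have e1 : ∀ i ∈ range I,
          ((if i < I then (K i:ℕ) else if i = I then c₀ + 1 else 0 : ℕ) : ℝ) * v i
          = (K i : ℝ) * v i := by
        intro i hi
        rw [Finset.mem_range] at hi
        simp [hi]
      rw [Finset.sum_congr rfl e1]
      have e2 : ∀ i ∈ range (J - I - 1),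
          ((if I + 1 + i < I then (K (I+1+i):ℕ) else if I + 1 + i = I then c₀ + 1 else 0 : ℕ) : ℝ) * v (I+1+i) = 0 := by
        intro i hi
        have h1 : ¬ (I + 1 + i < I) := by omega
        have h2 : ¬ (I + 1 + i = I) := by omega
        simp [h1, h2]
      rw [Finset.sum_congr rfl e2]
      simp [hs]
    rw [heq]
    first
    | exact hQc
    | exact hup
  }

lemma select {b : ℕ → ℕ} (hb : IsDSeq b) (N₀ : ℕ) {d : ℕ → ℤ}
    (h : ∀ L : ℕ, ∃ n, L ≤ n ∧ d (n+1) ≠ 0) :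
    ∃ nn : ℕ → ℕ, (∀ i, N₀ ≤ nn i) ∧ (∀ i, d (nn i + 1) ≠ 0) ∧
      (∀ i, ∑ i' ∈ Finset.range i, b (nn i' + 1) ≤ b (nn i)) := by
  classical
  have pick : ∀ L : ℕ, ∃ n, max N₀ L ≤ n ∧ d (n+1) ≠ 0 := fun L => by
    obtain ⟨n, hn1, hn2⟩ := h (max N₀ L)
    exact ⟨n, hn1, hn2⟩
  let g : ℕ → ℕ × ℕ := fun i => Nat.rec
    (((pick 0).choose, b ((pick 0).choose + 1)))
    (fun _ prev => ((pick prev.2).choose, prev.2 + b ((pick prev.2).choose + 1))) i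
  have hg0 : g 0 = ((pick 0).choose, b ((pick 0).choose + 1)) := rfl
  have hgs : ∀ i, g (i+1) = ((pick (g i).2).choose, (g i).2 + b ((pick (g i).2).choose + 1)) :=
    fun i => rfl
  have hspec : ∀ i, N₀ ≤ (g i).1 ∧ d ((g i).1 + 1) ≠ 0 := by
    intro i
    cases i with
    | zero =>
      rw [hg0]
      exact ⟨le_trans (le_max_left _ _) (pick 0).choose_spec.1, (pick 0).choose_spec.2⟩
    | succ k =>
      rw [hgs k]
      exact ⟨le_trans (le_max_left _ _) (pick (g k).2).choose_spec.1,
        (pick (g k).2).choose_spec.2⟩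
  have hsnd : ∀ i, (g i).2 = ∑ i' ∈ Finset.range (i+1), b ((g i').1 + 1) := by
    intro i
    induction i with
    | zero => rw [hg0]; simp [hg0]
    | succ k ih =>
      rw [Finset.sum_range_succ, ← ih, hgs k]
  have hle : ∀ i, ∑ i' ∈ Finset.range i, b ((g i').1 + 1) ≤ (g i).1 := by
    intro i
    cases i with
    | zero => simp
    | succ k =>
      have h1 : (g k).2 ≤ (g (k+1)).1 := by
        rw [hgs k]
        exact le_trans (le_max_right _ _) (pick (g k).2).choose_spec.1
      rw [← hsnd k]
      exact h1
  exact ⟨fun i => (g i).1, fun i => (hspec i).1, fun i => (hspec i).2,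
    fun i => le_trans (hle i) (ge_id hb _)⟩


end DS
theorem stmt_16 (b : ℕ → ℕ) (hb : IsDSeq b)
    (hinf : Filter.Tendsto (fun n => (b (n + 1) : ℝ) / b n) Filter.atTop Filter.atTop)
    (x : ℝ) (hx : x ∈ Set.Ioc (-(1 / 2) : ℝ) (1 / 2))
    (d : ℕ → ℤ) (hd : ∀ n : ℕ, 1 ≤ n → |(d n : ℝ)| ≤ (b n : ℝ) / (2 * b (n - 1)))
    (hsum : HasSum (fun n : ℕ => (d (n + 1) : ℝ) / b (n + 1)) x)
    (hcont : ∃ m : ℕ, 0 < m ∧ ∀ k : ℤ,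
      (∀ n : ℕ, ∃ z : ℤ, |(k : ℝ) / b n - z| ≤ 1 / (4 * m)) →
      ∃ z : ℤ, |(k : ℝ) * x - z| ≤ 1 / 4) :
    (∃ N : ℕ, ∀ n ≥ N, d n = 0) ∧
    (∃ (a : ℤ) (N : ℕ), x = (a : ℝ) / b N) := by
  classical
  obtain ⟨m, hm, hV⟩ := hcont
  have hbpos : ∀ k, (0:ℝ) < b k := fun k => by exact_mod_cast DS.pos hb k
  have hmR : (1:ℝ) ≤ m := by exact_mod_cast hm
  have key : ∃ N : ℕ, ∀ n ≥ N, d n = 0 := by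
    by_contra hK
    push_neg at hK
    set Rn : ℕ := 64*m^2 + 64*m + 64 with hRn
    have hR5 : (5:ℝ) ≤ (Rn:ℝ) := by
      have : 64 ≤ Rn := by omega
      exact_mod_cast le_trans (by norm_num) (Nat.cast_le.mpr this)
    obtain ⟨N₀, hN₀⟩ : ∃ N₀, ∀ l ≥ N₀, (Rn:ℝ) ≤ (b (l+1):ℝ)/b l :=
      Filter.eventually_atTop.mp (hinf.eventually (Filter.eventually_ge_atTop (Rn:ℝ)))
    have hNat : ∀ l, N₀ ≤ l → Rn * b l ≤ b (l+1) := by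
      intro l hl
      have h1 := (le_div_iff₀ (hbpos l)).mp (hN₀ l hl)
      exact_mod_cast h1
    set Kf : ℕ → ℕ := fun n => b (n+1) / (8 * m * b n) with hKf
    have hdenpos : ∀ n, 0 < 8 * m * b n := fun n =>
      Nat.mul_pos (Nat.mul_pos (by omega) hm) (DS.pos hb n)
    have hKmul : ∀ n, Kf n * (8 * m * b n) ≤ b (n+1) := fun n => Nat.div_mul_le_self _ _
    have h8m : ∀ n, N₀ ≤ n → 8 * m ≤ Kf n := by
      intro n hn
      rw [hKf]
      rw [Nat.le_div_iff_mul_le (hdenpos n)]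
      calc 8*m*(8*m*b n) = (64*m^2) * b n := by ring
        _ ≤ Rn * b n := Nat.mul_le_mul_right _ (by omega)
        _ ≤ b (n+1) := hNat n hn
    have hK1 : ∀ n, N₀ ≤ n → 1 ≤ Kf n := fun n hn => le_trans (by omega) (h8m n hn)
    have hKlow : ∀ n, N₀ ≤ n → b (n+1) ≤ 16 * m * Kf n * b n := by
      intro n hn
      have h1 : 8*m*b n * Kf n + b (n+1) % (8*m*b n) = b (n+1) :=
        Nat.div_add_mod (b (n+1)) (8*m*b n)
      have h2 : b (n+1) % (8*m*b n) < 8*m*b n := Nat.mod_lt _ (hdenpos n)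
      have h3 := hK1 n hn
      nlinarith [hKmul n]
    -- tail bounds
    have hrb : ∀ n, N₀ ≤ n → |DS.r b d x n| ≤ 5/8 := by
      intro n hn
      exact DS.r_bound d x hb hd hsum hR5 n (fun l hl => hN₀ l (le_trans hn hl))
    -- single-scale dist
    have hdist : ∀ n, N₀ ≤ n → ∀ c : ℤ, |c| ≤ (Kf n : ℤ) →
        ∃ z : ℤ, |(c:ℝ) * DS.r b d x n - z| ≤ 1/4 := by
      intro n hn c hc
      have hmem : ∀ j : ℕ, ∃ z : ℤ, |((c * b n : ℤ) : ℝ) / b j - z| ≤ 1 / (4 * m) := by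
        intro j
        rcases le_or_gt j n with hj | hj
        · refine ⟨c * ((b n / b j : ℕ) : ℤ), ?_⟩
          have hcast : (((b n / b j : ℕ)) : ℝ) = (b n : ℝ) / b j :=
            Nat.cast_div (DS.dvd_of_le hb hj) (hbpos j).ne'
          rw [Int.cast_mul, Int.cast_mul, Int.cast_natCast, Int.cast_natCast, hcast,
            mul_div_assoc, sub_self, abs_zero]
          positivity
        · refine ⟨0, ?_⟩
          push_cast
          rw [sub_zero, abs_div, abs_mul]
          rw [abs_of_pos (hbpos j), abs_of_pos (hbpos n)]
          have hcr : |(c:ℝ)| ≤ Kf n := by exact_mod_cast hc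
          have hKb : (Kf n : ℝ) * b n * (8*m) ≤ b (n+1) := by
            have := hKmul n
            have : ((Kf n * (8 * m * b n) : ℕ) : ℝ) ≤ b (n+1) := by exact_mod_cast this
            push_cast at this
            nlinarith
          have hbj : (b (n+1) : ℝ) ≤ b j := by
            exact_mod_cast DS.mono hb (by omega : n + 1 ≤ j)
          rw [div_le_div_iff₀ (hbpos j) (by positivity)]
          calc |(c:ℝ)| * b n * (4*m) ≤ (Kf n : ℝ) * b n * (4*m) :=
                mul_le_mul_of_nonneg_right
                  (mul_le_mul_of_nonneg_right hcr (hbpos n).le) (by positivity)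
            _ ≤ b (n+1) / 2 := by nlinarith
            _ ≤ b j := by linarith
            _ = 1 * b j := (one_mul _).symm
      obtain ⟨z, hz⟩ := hV (c * b n) hmem
      refine ⟨z - c * DS.Z b d n, ?_⟩
      have he : ((c * b n : ℤ) : ℝ) * x = (c : ℝ) * DS.Z b d n + (c:ℝ) * DS.r b d x n := by
        push_cast
        rw [mul_assoc, DS.bx_eq d x hb n]
        ring
      have he2 : (c:ℝ) * DS.r b d x n - ((z : ℤ) - c * DS.Z b d n : ℤ) =
          ((c * b n : ℤ) : ℝ) * x - z := by
        rw [he]; push_cast; ring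
      rw [he2]
      exact hz
    -- |e * r| ≤ 1/4 for e ≤ Kf n
    have habs : ∀ n, N₀ ≤ n → ∀ e : ℕ, e ≤ Kf n → |(e:ℝ) * DS.r b d x n| ≤ 1/4 := by
      intro n hn
      have hr14 : |DS.r b d x n| ≤ 1/4 := by
        have h1 := hdist n hn 1 (by exact_mod_cast hK1 n hn)
        simp only [Int.cast_one, one_mul] at h1
        exact DS.dist_small h1 (lt_of_le_of_lt (hrb n hn) (by norm_num))
      intro e
      induction e with
      | zero => intro _; simp
      | succ k ih =>
        intro hk
        have hk' : k ≤ Kf n := by omega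
        have h1 : |((k+1:ℕ):ℝ) * DS.r b d x n| < 3/4 := by
          push_cast
          have : ((k:ℝ)+1) * DS.r b d x n = (k:ℝ) * DS.r b d x n + DS.r b d x n := by ring
          rw [this]
          calc |(k:ℝ) * DS.r b d x n + DS.r b d x n|
              ≤ |(k:ℝ) * DS.r b d x n| + |DS.r b d x n| := abs_add_le _ _
            _ ≤ 1/4 + 1/4 := add_le_add (ih hk') hr14
            _ < 3/4 := by norm_num
        have h2 := hdist n hn ((k:ℤ)+1) (by
          rw [abs_of_nonneg (by omega : (0:ℤ) ≤ (k:ℤ)+1)]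
          exact_mod_cast hk)
        push_cast at h2 ⊢
        exact DS.dist_small h2 (by push_cast at h1; exact h1)
    have hsmall : ∀ n, N₀ ≤ n → |DS.r b d x n| ≤ 1/(32*m) := by
      intro n hn
      have h1 := habs n hn (Kf n) le_rfl
      rw [abs_mul, abs_of_nonneg (Nat.cast_nonneg _)] at h1
      have h2 : (8*m : ℝ) ≤ Kf n := by exact_mod_cast h8m n hn
      have h3 : (0:ℝ) ≤ |DS.r b d x n| := abs_nonneg _
      have h4 : (8*m:ℝ) * |DS.r b d x n| ≤ 1/4 := le_trans (by nlinarith) h1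
      rw [le_div_iff₀ (by positivity)]
      linarith
    have hlow : ∀ n, N₀ ≤ n → d (n+1) ≠ 0 →
        1/(32*m) ≤ (Kf n : ℝ) * |DS.r b d x n| := by
      intro n hn hdn
      have hd1 : (1:ℝ) ≤ |(d (n+1) : ℝ)| := by
        rw [← Int.cast_abs]
        exact_mod_cast Int.one_le_abs (by exact_mod_cast hdn)
      have hr1 : |DS.r b d x (n+1)| ≤ 1/4 := by
        have := hsmall (n+1) (by omega)
        calc |DS.r b d x (n+1)| ≤ 1/(32*m) := this
          _ ≤ 1/4 := by rw [div_le_div_iff₀ (by positivity) (by norm_num)]; nlinarith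
      have hrlow : (b n : ℝ) / (2 * b (n+1)) ≤ |DS.r b d x n| := by
        rw [DS.r_rec d x hb n, abs_mul,
          abs_of_nonneg (by positivity : (0:ℝ) ≤ (b n:ℝ)/b (n+1))]
        have h5 : (1:ℝ)/2 ≤ |(d (n+1) : ℝ) + DS.r b d x (n+1)| := by
          have h6 : |(d (n+1):ℝ)| ≤ |(d (n+1) : ℝ) + DS.r b d x (n+1)| + |DS.r b d x (n+1)| := by
            calc |(d (n+1):ℝ)| = |((d (n+1):ℝ) + DS.r b d x (n+1)) - DS.r b d x (n+1)| := by
                  rw [add_sub_cancel_right]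
              _ ≤ _ := abs_sub _ _
          linarith
        calc (b n : ℝ) / (2 * b (n+1)) = (b n:ℝ)/b (n+1) * (1/2) := by ring
          _ ≤ (b n:ℝ)/b (n+1) * |(d (n+1) : ℝ) + DS.r b d x (n+1)| := by
              apply mul_le_mul_of_nonneg_left h5 (by positivity)
      have hKge : (b (n+1):ℝ) ≤ 16*m*(Kf n)*(b n) := by exact_mod_cast hKlow n hn
      have hbn1 := hbpos (n+1)
      have hbn := hbpos n
      have hKpos : (0:ℝ) < Kf n := by exact_mod_cast hK1 n hn
      have h7 : 1/(32*(m:ℝ)) ≤ (b n : ℝ) / (2 * b (n+1)) * (Kf n) := by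
        rw [div_mul_eq_mul_div,
          div_le_div_iff₀ (by linarith : (0:ℝ) < 32*(m:ℝ)) (by linarith : (0:ℝ) < 2*(b (n+1):ℝ))]
        nlinarith [hKge]
      calc 1/(32*m) ≤ (b n : ℝ) / (2 * b (n+1)) * (Kf n) := h7
        _ ≤ |DS.r b d x n| * (Kf n) := mul_le_mul_of_nonneg_right hrlow hKpos.le
        _ = (Kf n : ℝ) * |DS.r b d x n| := by ring
    -- selection of scales
    have hK' : ∀ L : ℕ, ∃ n, L ≤ n ∧ d (n+1) ≠ 0 := by
      intro L
      obtain ⟨n', hn', hd'⟩ := hK (L+1)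
      refine ⟨n' - 1, by omega, ?_⟩
      rw [show n' - 1 + 1 = n' by omega]
      exact hd'
    obtain ⟨nn, hnn₀, hnnd, hnnsum⟩ := DS.select hb N₀ hK'
    set J : ℕ := 8*m + 1 with hJ
    have hbig : (1:ℝ)/4 < ∑ i ∈ Finset.range J, (Kf (nn i) : ℝ) * |DS.r b d x (nn i)| := by
      have hterm : ∀ i ∈ Finset.range J,
          1/(32*(m:ℝ)) ≤ (Kf (nn i) : ℝ) * |DS.r b d x (nn i)| :=
        fun i _ => hlow (nn i) (hnn₀ i) (hnnd i)
      have hsum' := Finset.card_nsmul_le_sum (Finset.range J) _ _ hterm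
      rw [Finset.card_range, nsmul_eq_mul] at hsum'
      have hJval : (J:ℝ) = 8*(m:ℝ)+1 := by rw [hJ]; push_cast; ring
      calc (1:ℝ)/4 < (8*(m:ℝ)+1) * (1/(32*m)) := by
            rw [mul_one_div, lt_div_iff₀ (by linarith)]
            nlinarith
        _ = (J:ℝ) * (1/(32*m)) := by rw [hJval]
        _ ≤ _ := hsum'
    obtain ⟨e, heK, hT1, hT2⟩ := DS.greedy
      (v := fun i => |DS.r b d x (nn i)|) (K := fun i => Kf (nn i)) (β := 1/(32*(m:ℝ)))
      (J := J) (fun i _ => abs_nonneg _) (fun i _ => hsmall (nn i) (hnn₀ i)) hbig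
    set T := ∑ i ∈ Finset.range J, ((e i : ℝ)) * |DS.r b d x (nn i)| with hTdef
    set ε : ℕ → ℤ := fun i => if 0 ≤ DS.r b d x (nn i) then 1 else -1 with hε
    have hεr : ∀ i, (ε i : ℝ) * DS.r b d x (nn i) = |DS.r b d x (nn i)| := by
      intro i
      rw [hε]
      by_cases h : 0 ≤ DS.r b d x (nn i)
      · simp only [h, if_true]; rw [abs_of_nonneg h]; push_cast; ring
      · simp only [h, if_false]; rw [abs_of_neg (lt_of_not_ge h)]; push_cast; ring
    have hεabs : ∀ i, |(ε i : ℝ)| = 1 := by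
      intro i
      rw [hε]
      by_cases h : 0 ≤ DS.r b d x (nn i) <;> simp [h]
    set k : ℤ := ∑ i ∈ Finset.range J, (ε i * e i) * b (nn i) with hk
    have hmem : ∀ j : ℕ, ∃ z : ℤ, |(k:ℝ)/b j - z| ≤ 1/(4*m) := by
      intro j
      set g : ℕ → ℝ := fun i => (ε i : ℝ) * (e i : ℝ) * (b (nn i) : ℝ) / b j with hg
      set P : ℕ → Prop := fun i => j ≤ nn i with hP
      refine ⟨∑ i ∈ (Finset.range J).filter P, ε i * e i * ((b (nn i) / b j : ℕ):ℤ), ?_⟩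
      have hkr : (k:ℝ)/ b j = ∑ i ∈ Finset.range J, g i := by
        rw [hk, hg]
        push_cast
        rw [Finset.sum_div]
      have hzc : ((∑ i ∈ (Finset.range J).filter P, ε i * e i * ((b (nn i) / b j : ℕ):ℤ) : ℤ) : ℝ)
          = ∑ i ∈ (Finset.range J).filter P, g i := by
        rw [Int.cast_sum]
        apply Finset.sum_congr rfl
        intro i hi
        have hij : j ≤ nn i := by
          have := (Finset.mem_filter.mp hi).2
          rwa [hP] at this
        rw [Int.cast_mul, Int.cast_mul, Int.cast_natCast, Int.cast_natCast,
          Nat.cast_div (DS.dvd_of_le hb hij) (hbpos j).ne', hg]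
        push_cast
        ring
      have hsplit : (k:ℝ)/b j -
          ((∑ i ∈ (Finset.range J).filter P, ε i * e i * ((b (nn i) / b j : ℕ):ℤ) : ℤ) : ℝ)
          = ∑ i ∈ (Finset.range J).filter (fun i => ¬ P i), g i := by
        rw [hkr, hzc, ← Finset.sum_filter_add_sum_filter_not (Finset.range J) P g]
        ring
      rw [hsplit]
      have hNatB : (∑ i ∈ (Finset.range J).filter (fun i => ¬ P i), Kf (nn i) * b (nn i)) * (8*m)
          ≤ 2 * b j := by
        set T' := (Finset.range J).filter (fun i => ¬ P i) with hT'
        rcases T'.eq_empty_or_nonempty with hE | hNE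
        · rw [hE]; simp
        · set I' := T'.max' hNE with hI'
          have hImem : I' ∈ T' := T'.max'_mem hNE
          have hIlt : nn I' + 1 ≤ j := by
            have h1 := (Finset.mem_filter.mp hImem).2
            rw [hP] at h1
            omega
          calc (∑ i ∈ T', Kf (nn i) * b (nn i)) * (8*m)
              = ∑ i ∈ T', Kf (nn i) * b (nn i) * (8*m) := Finset.sum_mul _ _ _
            _ ≤ ∑ i ∈ T', b (nn i + 1) := Finset.sum_le_sum (fun i _ => by
                calc Kf (nn i) * b (nn i) * (8*m) = Kf (nn i) * (8*m*b (nn i)) := by ring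
                  _ ≤ b (nn i + 1) := hKmul (nn i))
            _ ≤ ∑ i ∈ Finset.range (I'+1), b (nn i + 1) := Finset.sum_le_sum_of_subset (by
                intro i hi
                rw [Finset.mem_range]
                exact Nat.lt_succ_of_le (T'.le_max' i hi))
            _ = (∑ i ∈ Finset.range I', b (nn i + 1)) + b (nn I' + 1) := Finset.sum_range_succ _ _
            _ ≤ b (nn I') + b (nn I' + 1) := by have := hnnsum I'; omega
            _ ≤ b (nn I' + 1) + b (nn I' + 1) :=
                Nat.add_le_add_right (DS.mono hb (Nat.le_succ (nn I'))) _
            _ ≤ b j + b j := by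
                have h9 : b (nn I' + 1) ≤ b j := DS.mono hb hIlt
                omega
            _ = 2 * b j := by ring
      have habsg : ∀ i ∈ (Finset.range J).filter (fun i => ¬ P i),
          |g i| ≤ (Kf (nn i) : ℝ) * b (nn i) / b j := by
        intro i hi
        rw [hg]
        simp only []
        rw [abs_div, abs_of_pos (hbpos j), abs_mul, abs_mul, hεabs i, one_mul,
          abs_of_nonneg (Nat.cast_nonneg (e i)), abs_of_nonneg (Nat.cast_nonneg (b (nn i)))]
        exact div_le_div_of_nonneg_right
          (mul_le_mul_of_nonneg_right (by exact_mod_cast heK i) (Nat.cast_nonneg _))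
          (hbpos j).le
      calc |∑ i ∈ (Finset.range J).filter (fun i => ¬ P i), g i|
          ≤ ∑ i ∈ (Finset.range J).filter (fun i => ¬ P i), |g i| :=
            Finset.abs_sum_le_sum_abs _ _
        _ ≤ ∑ i ∈ (Finset.range J).filter (fun i => ¬ P i), (Kf (nn i) : ℝ) * b (nn i) / b j :=
            Finset.sum_le_sum habsg
        _ = (∑ i ∈ (Finset.range J).filter (fun i => ¬ P i), (Kf (nn i) : ℝ) * b (nn i)) / b j := by
            rw [Finset.sum_div]
        _ ≤ 1/(4*m) := by
            rw [div_le_div_iff₀ (hbpos j) (by linarith : (0:ℝ) < 4*(m:ℝ))]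
            have hc : ((∑ i ∈ (Finset.range J).filter (fun i => ¬ P i),
                Kf (nn i) * b (nn i) : ℕ):ℝ) * ((8:ℝ)*m) ≤ 2 * b j := by
              exact_mod_cast hNatB
            push_cast at hc
            nlinarith [hc]
    obtain ⟨z, hz4⟩ := hV k hmem
    have hkx : (k:ℝ) * x
        = ((∑ i ∈ Finset.range J, (ε i * e i) * DS.Z b d (nn i) : ℤ) : ℝ) + T := by
      rw [hk]
      push_cast
      rw [Finset.sum_mul, hTdef, ← Finset.sum_add_distrib]
      apply Finset.sum_congr rfl
      intro i _
      have h1 := DS.bx_eq d x hb (nn i)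
      calc (ε i:ℝ) * (e i) * (b (nn i)) * x
          = (ε i:ℝ) * (e i) * ((b (nn i):ℝ) * x) := by ring
        _ = (ε i:ℝ) * (e i) * ((DS.Z b d (nn i):ℝ) + DS.r b d x (nn i)) := by rw [h1]
        _ = (ε i:ℝ) * (e i) * (DS.Z b d (nn i):ℝ)
            + (e i:ℝ) * ((ε i:ℝ) * DS.r b d x (nn i)) := by ring
        _ = (ε i:ℝ) * (e i) * (DS.Z b d (nn i):ℝ) + (e i:ℝ) * |DS.r b d x (nn i)| := by
            rw [hεr i]
    rw [hkx] at hz4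
    set W : ℤ := ∑ i ∈ Finset.range J, (ε i * e i) * DS.Z b d (nn i) with hW
    have hm32 : 1/(32*(m:ℝ)) ≤ 1/32 := by
      rw [div_le_div_iff₀ (by linarith) (by norm_num)]
      linarith
    rcases le_or_gt (z - W) 0 with hw0 | hw1
    · have hcw : ((z:ℝ) - W) ≤ 0 := by exact_mod_cast hw0
      have h2 : (W:ℝ) + T - z ≥ T := by linarith
      have h3 := le_abs_self ((W:ℝ) + T - z)
      linarith
    · have hcw : (1:ℝ) ≤ (z:ℝ) - W := by exact_mod_cast hw1
      have h3 := neg_abs_le ((W:ℝ) + T - z)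
      linarith
  refine ⟨key, ?_⟩
  obtain ⟨N, hN⟩ := key
  have hx' : HasSum (fun n : ℕ => (d (n + 1) : ℝ) / b (n + 1))
      (∑ j ∈ Finset.range N, (d (j + 1) : ℝ) / b (j + 1)) := by
    apply hasSum_sum_of_ne_finset_zero
    intro j hj
    rw [Finset.mem_range, not_lt] at hj
    rw [hN (j+1) (by omega)]
    simp
  have hxS : x = DS.S b d N := hsum.unique hx'
  refine ⟨DS.Z b d N, N, ?_⟩
  have h1 : (b N : ℝ) * x = DS.Z b d N := by
    rw [DS.Z_eq d hb N, hxS]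
  rw [eq_div_iff (hbpos N).ne']
  linarith [h1]
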